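/- Consider the k-graph Δ_k with vertices ℤ^k, morphisms {(m,n) ∈ ℤ^k × ℤ^k : m ≤ n}, r(m,n)=m, s(m,n)=n, composition (m,n)(n,p)=(m,p), and degree d(m,n)=n−m. The action α of ℕ^k on Δ_k given by α_p(m,n) = (m+p, n+p) is free, but it admits no fundamental domain. -/

import Mathlib

/-- The data of a `k`-graph: a small category with range `r`, source `s`,
identities `ι`, partially-defined composition `comp`, and a degree map `d` into `ℕ^k`. -/
structure KGraphData (k : ℕ) where
  Obj : Type
  Mor : Type
  r : Mor → Obj
  s : Mor → Obj
  ι : Obj → Mor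
  comp : (p q : Mor) → s p = r q → Mor
  d : Mor → (Fin k → ℕ)

/-- The axioms making the data of a `k`-graph into an actual `k`-graph
(category axioms, functoriality of `d`, and the unique factorisation property). -/
structure IsKGraph {k : ℕ} (Λ : KGraphData k) : Prop where
  r_ι : ∀ v, Λ.r (Λ.ι v) = v
  s_ι : ∀ v, Λ.s (Λ.ι v) = v
  d_ι : ∀ v, Λ.d (Λ.ι v) = 0
  r_comp : ∀ p q h, Λ.r (Λ.comp p q h) = Λ.r p
  s_comp : ∀ p q h, Λ.s (Λ.comp p q h) = Λ.s q
  d_comp : ∀ p q h, Λ.d (Λ.comp p q h) = Λ.d p + Λ.d q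
  id_comp : ∀ (p : Λ.Mor) (h : Λ.s (Λ.ι (Λ.r p)) = Λ.r p), Λ.comp (Λ.ι (Λ.r p)) p h = p
  comp_id : ∀ (p : Λ.Mor) (h : Λ.s p = Λ.r (Λ.ι (Λ.s p))), Λ.comp p (Λ.ι (Λ.s p)) h = p
  assoc : ∀ (p q t : Λ.Mor) (h1 : Λ.s p = Λ.r q) (h2 : Λ.s q = Λ.r t)
    (h3 : Λ.s (Λ.comp p q h1) = Λ.r t) (h4 : Λ.s p = Λ.r (Λ.comp q t h2)),
    Λ.comp (Λ.comp p q h1) t h3 = Λ.comp p (Λ.comp q t h2) h4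
  factor : ∀ (l : Λ.Mor) (m n : Fin k → ℕ), Λ.d l = m + n →
    ∃! pq : Λ.Mor × Λ.Mor, ∃ h : Λ.s pq.1 = Λ.r pq.2,
      Λ.d pq.1 = m ∧ Λ.d pq.2 = n ∧ Λ.comp pq.1 pq.2 h = l

/-- A morphism of `k`-graphs: a degree-preserving functor. -/
structure KGraphHom {k : ℕ} (Λ Sg : KGraphData k) where
  obj : Λ.Obj → Sg.Obj
  mor : Λ.Mor → Sg.Mor
  map_r : ∀ p, Sg.r (mor p) = obj (Λ.r p)
  map_s : ∀ p, Sg.s (mor p) = obj (Λ.s p)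
  map_ι : ∀ v, mor (Λ.ι v) = Sg.ι (obj v)
  map_comp : ∀ (p q : Λ.Mor) (h : Λ.s p = Λ.r q) (h' : Sg.s (mor p) = Sg.r (mor q)),
    mor (Λ.comp p q h) = Sg.comp (mor p) (mor q) h'
  map_d : ∀ p, Sg.d (mor p) = Λ.d p

/-- The skew-product `k`-graph `Λ ×_η S` determined by a functor `η : Λ → S`. -/
def KGraphData.skew {k : ℕ} (Λ : KGraphData k) (S : Type) [Monoid S] (η : Λ.Mor → S) :
    KGraphData k where
  Obj := Λ.Obj × S
  Mor := Λ.Mor × S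
  r p := (Λ.r p.1, p.2)
  s p := (Λ.s p.1, p.2 * η p.1)
  ι v := (Λ.ι v.1, v.2)
  comp p q h := (Λ.comp p.1 q.1 (congrArg Prod.fst h), p.2)
  d p := Λ.d p.1

/-- `F` is a fundamental domain for the action `α` of `S` on (the morphisms of) `Sg`:
every morphism is `α t μ` for exactly one pair `(μ, t) ∈ F × S`,
and `F` is closed under taking ranges. -/
def IsFundDomain {k : ℕ} (Sg : KGraphData k) (S : Type) [Monoid S]
    (α : S → Sg.Mor → Sg.Mor) (F : Set Sg.Mor) : Prop :=
  (∀ σ : Sg.Mor, ∃! p : Sg.Mor × S, p.1 ∈ F ∧ α p.2 p.1 = σ) ∧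
    ∀ μ ∈ F, Sg.ι (Sg.r μ) ∈ F

/-- A Cuntz–Krieger `Λ`-family in a `*`-algebra. -/
structure IsCKFamily {k : ℕ} (Λ : KGraphData k) (A : Type*) [NonUnitalRing A] [StarRing A]
    (T : Λ.Mor → A) : Prop where
  ck1_sa : ∀ v, star (T (Λ.ι v)) = T (Λ.ι v)
  ck1_idem : ∀ v, T (Λ.ι v) * T (Λ.ι v) = T (Λ.ι v)
  ck1_orth : ∀ v w, v ≠ w → T (Λ.ι v) * T (Λ.ι w) = 0
  ck2 : ∀ (p q : Λ.Mor) (h : Λ.s p = Λ.r q), T (Λ.comp p q h) = T p * T q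
  ck3 : ∀ p, star (T p) * T p = T (Λ.ι (Λ.s p))
  ck4 : ∀ (v : Λ.Obj) (n : Fin k → ℕ) (F : Finset Λ.Mor),
    (∀ p, p ∈ F ↔ (Λ.r p = v ∧ Λ.d p = n)) →
    T (Λ.ι v) = F.sum fun p => T p * star (T p)

/-- Row-finite: finitely many paths of each degree into each vertex. -/
def RowFinite {k : ℕ} (Λ : KGraphData k) : Prop :=
  ∀ (v : Λ.Obj) (n : Fin k → ℕ), {p : Λ.Mor | Λ.r p = v ∧ Λ.d p = n}.Finite

/-- No sources: every vertex receives a path of each degree. -/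
def NoSources {k : ℕ} (Λ : KGraphData k) : Prop :=
  ∀ (v : Λ.Obj) (n : Fin k → ℕ), ∃ p : Λ.Mor, Λ.r p = v ∧ Λ.d p = n

/-- The `k`-graph `Δ_k`: vertices `ℤ^k`, morphisms pairs `(m, n)` with `m ≤ n`,
`r(m,n) = m`, `s(m,n) = n`, composition `(m,n)(n,p) = (m,p)`, degree `d(m,n) = n - m`. -/
def delta (k : ℕ) : KGraphData k where
  Obj := Fin k → ℤ
  Mor := {p : (Fin k → ℤ) × (Fin k → ℤ) // p.1 ≤ p.2}
  r p := p.1.1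
  s p := p.1.2
  ι v := ⟨(v, v), le_refl v⟩
  comp p q h := ⟨(p.1.1, q.1.2), le_trans p.2 (le_of_le_of_eq (le_of_eq h) rfl |>.trans q.2)⟩
  d p := fun i => (p.1.2 i - p.1.1 i).toNat

/-- The translation action of `ℕ^k` on `Δ_k`: `α_p(m, n) = (m + p, n + p)`. -/
def deltaAct (k : ℕ) (p : Fin k → ℕ) (σ : (delta k).Mor) : (delta k).Mor :=
  ⟨(σ.1.1 + fun i => (p i : ℤ), σ.1.2 + fun i => (p i : ℤ)),
    add_le_add_left σ.2 _⟩

/-- `Δ_k` is a `k`-graph, the translation action of `ℕ^k` on `Δ_k` is free,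
but it admits no fundamental domain (for `k ≥ 1`). -/
theorem delta_free_action_no_fundamental_domain (k : ℕ) (hk : 1 ≤ k) :
    IsKGraph (delta k) ∧
    (∀ (p q : Fin k → ℕ) (σ : (delta k).Mor), deltaAct k p σ = deltaAct k q σ → p = q) ∧
    ¬ ∃ F : Set (delta k).Mor,
        (∀ σ : (delta k).Mor, ∃! mp : (delta k).Mor × (Fin k → ℕ),
            mp.1 ∈ F ∧ deltaAct k mp.2 mp.1 = σ) ∧
        (∀ μ ∈ F, (delta k).ι ((delta k).r μ) ∈ F) := by
  refine ⟨?_, ?_, ?_⟩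
  · constructor
    · intro v; rfl
    · intro v; rfl
    · intro v; funext i; simp [delta]
    · intro p q h; rfl
    · intro p q h; rfl
    · rintro ⟨⟨pa, pb⟩, hp⟩ ⟨⟨qa, qb⟩, hq⟩ h
      have heq : pb = qa := h
      subst heq
      funext i
      have h1 : pa i ≤ pb i := hp i
      have h2 : pb i ≤ qb i := hq i
      show (qb i - pa i).toNat = (pb i - pa i).toNat + (qb i - pb i).toNat
      omega
    · intro p h; rfl
    · intro p h; rfl
    · intro p q t h1 h2 h3 h4; rfl
    · -- factor
      rintro ⟨⟨a, b⟩, hab⟩ m n hd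
      have hdi : ∀ i, b i - a i = (m i : ℤ) + n i := by
        intro i
        have h1 : (b i - a i).toNat = m i + n i := congrFun hd i
        have h2 : a i ≤ b i := hab i
        omega
      have hac : a ≤ fun i => a i + m i := by
        intro i; show a i ≤ a i + (m i : ℤ); omega
      have hcb : (fun i => a i + (m i : ℤ)) ≤ b := by
        intro i; have h1 := hdi i; show a i + (m i : ℤ) ≤ b i; omega
      refine ⟨(⟨(a, fun i => a i + m i), hac⟩, ⟨((fun i => a i + m i), b), hcb⟩),
        ⟨rfl, ?_, ?_, ?_⟩, ?_⟩
      · funext i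
        show ((a i + m i) - a i).toNat = m i
        omega
      · funext i
        have := hdi i
        show (b i - (a i + m i)).toNat = n i
        omega
      · exact Subtype.ext rfl
      · rintro ⟨⟨⟨pa, pb⟩, hp⟩, ⟨⟨qa, qb⟩, hq⟩⟩ ⟨h, hdp, hdq, hcomp⟩
        have h' : pb = qa := h
        have hval := congrArg Subtype.val hcomp
        have hpa : pa = a := congrArg Prod.fst hval
        have hqb : qb = b := congrArg Prod.snd hval
        have hpb : pb = fun i => a i + m i := by
          funext i
          have h1 : (pb i - pa i).toNat = m i := congrFun hdp i
          have h2 : pa i ≤ pb i := hp i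
          rw [hpa] at h1 h2
          omega
        have hqa : qa = fun i => a i + (m i : ℤ) := by rw [← h', hpb]
        subst hpa hqb hpb hqa
        rfl
  · -- freeness
    intro p q σ h
    have hval := congrArg (fun x => x.val.1) h
    simp only [deltaAct] at hval
    funext i
    have := congrFun hval i
    simp only [Pi.add_apply] at this
    have : (p i : ℤ) = q i := by omega
    exact_mod_cast this
  · -- no fundamental domain
    rintro ⟨F, huniq, -⟩
    -- identities in F: for each v there is d with ι d ∈ F and unique representation
    have key : ∀ v : Fin k → ℤ, ∃ d : Fin k → ℤ, ∃ p : Fin k → ℕ,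
        (delta k).ι d ∈ F ∧ (d + fun i => (p i : ℤ)) = v := by
      intro v
      obtain ⟨⟨μ, p⟩, ⟨hμF, hμ⟩, -⟩ := huniq ((delta k).ι v)
      have hval := congrArg Subtype.val hμ
      simp only [deltaAct, delta] at hval
      have h1 : μ.1.1 + (fun i => (p i : ℤ)) = v := congrArg Prod.fst hval
      have h2 : μ.1.2 + (fun i => (p i : ℤ)) = v := congrArg Prod.snd hval
      have hμeq : μ.1.1 = μ.1.2 := by
        have := h1.trans h2.symm
        funext i
        have := congrFun this i
        simp only [Pi.add_apply] at this
        omega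
      have : μ = (delta k).ι μ.1.1 := by
        apply Subtype.ext
        exact Prod.ext rfl hμeq.symm
      refine ⟨μ.1.1, p, this ▸ hμF, h1⟩
    -- get d₀ with ι d₀ ∈ F
    obtain ⟨d₀, p₀, hd₀F, -⟩ := key 0
    -- unit vector at coordinate 0
    set i₀ : Fin k := ⟨0, hk⟩
    set e : Fin k → ℕ := fun i => if i = i₀ then 1 else 0 with he
    obtain ⟨d₁, p₁, hd₁F, hd₁⟩ := key (d₀ - fun i => (e i : ℤ))
    -- two representations of ι d₀
    have hrep : deltaAct k (p₁ + e) ((delta k).ι d₁) = (delta k).ι d₀ := by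
      apply Subtype.ext
      show ((d₁ + fun i => ((p₁ + e) i : ℤ)), (d₁ + fun i => ((p₁ + e) i : ℤ)))
        = ((d₀ : Fin k → ℤ), d₀)
      have : (d₁ + fun i => ((p₁ + e) i : ℤ)) = d₀ := by
        funext i
        have := congrFun hd₁ i
        simp only [Pi.add_apply, Pi.sub_apply] at this ⊢
        push_cast
        omega
      rw [this]
    have hrep0 : deltaAct k 0 ((delta k).ι d₀) = (delta k).ι d₀ := by
      apply Subtype.ext
      have h0 : (d₀ + fun i => (((0 : Fin k → ℕ) i : ℕ) : ℤ)) = d₀ := by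
        funext i; simp
      show ((d₀ + fun i => (((0 : Fin k → ℕ)) i : ℤ)), (d₀ + fun i => (((0 : Fin k → ℕ)) i : ℤ)))
        = ((d₀ : Fin k → ℤ), d₀)
      rw [h0]
    obtain ⟨w, -, hwu⟩ := huniq ((delta k).ι d₀)
    have h1 := hwu ((delta k).ι d₁, p₁ + e) ⟨hd₁F, hrep⟩
    have h2 := hwu ((delta k).ι d₀, 0) ⟨hd₀F, hrep0⟩
    have : p₁ + e = (0 : Fin k → ℕ) := by
      have := h1.trans h2.symm
      exact congrArg Prod.snd this
    have := congrFun this i₀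
    simp [he] at this
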